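/- Let X : [0, T] → ℝ^{2N} be a C¹ curve with components X(t) = (X₁(t), X₂(t)) such that H(X₁(t)) is invertible for every t and the velocity-consistency condition Ẋ₁(t) = X₂(t) holds for all t ∈ [0, T]. Then the action functional of X equals the total squared control effort: A(X) = ∫₀ᵀ ‖u(t)‖² dt, where u(t) = H(X₁(t)) Ẋ₂(t) + C(X(t)) is the extracted control. -/

import Mathlib

open Matrix

noncomputable section AGHFSetup

/-- Bridge from plain vectors to `EuclideanSpace` (they are definitionally equal). -/
def toEuc {N : ℕ} (v : Fin N → ℝ) : EuclideanSpace ℝ (Fin N) := WithLp.toLp 2 v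

/-- First (position) block of a state `x ∈ ℝ^{2N}`. -/
def proj1 {N : ℕ} (x : EuclideanSpace ℝ (Fin N ⊕ Fin N)) : EuclideanSpace ℝ (Fin N) :=
  WithLp.toLp 2 (fun i => x (Sum.inl i))

/-- Second (velocity) block of a state `x ∈ ℝ^{2N}`. -/
def proj2 {N : ℕ} (x : EuclideanSpace ℝ (Fin N ⊕ Fin N)) : EuclideanSpace ℝ (Fin N) :=
  WithLp.toLp 2 (fun i => x (Sum.inr i))

/-- The pair `(a, b) ∈ ℝ^{2N}` built from `a, b ∈ ℝᴺ`. -/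
def pair2 {N : ℕ} (a b : EuclideanSpace ℝ (Fin N)) : EuclideanSpace ℝ (Fin N ⊕ Fin N) :=
  WithLp.toLp 2 (Sum.elim a b)

/-- The drift `F_d(x) = (x₂, −H(x₁)⁻¹ C(x))` (with `B = I`). -/
def driftFd {N : ℕ} (H : EuclideanSpace ℝ (Fin N) → Matrix (Fin N) (Fin N) ℝ)
    (C : EuclideanSpace ℝ (Fin N ⊕ Fin N) → EuclideanSpace ℝ (Fin N))
    (x : EuclideanSpace ℝ (Fin N ⊕ Fin N)) : EuclideanSpace ℝ (Fin N ⊕ Fin N) :=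
  pair2 (proj2 x) (WithLp.toLp 2 (-((H (proj1 x))⁻¹ *ᵥ C x)))

/-- The AGHF metric `G(x) = [[k • I, 0], [0, H(x₁)ᵀ H(x₁)]]`. -/
def metricG {N : ℕ} (H : EuclideanSpace ℝ (Fin N) → Matrix (Fin N) (Fin N) ℝ) (k : ℝ)
    (x : EuclideanSpace ℝ (Fin N ⊕ Fin N)) : Matrix (Fin N ⊕ Fin N) (Fin N ⊕ Fin N) ℝ :=
  Matrix.fromBlocks (k • (1 : Matrix (Fin N) (Fin N) ℝ)) 0 0 ((H (proj1 x))ᵀ * H (proj1 x))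

/-- The AGHF Lagrangian `L(x, v) = (v − F_d(x))ᵀ G(x) (v − F_d(x))`. -/
def lagrangianL {N : ℕ} (H : EuclideanSpace ℝ (Fin N) → Matrix (Fin N) (Fin N) ℝ)
    (C : EuclideanSpace ℝ (Fin N ⊕ Fin N) → EuclideanSpace ℝ (Fin N)) (k : ℝ)
    (x v : EuclideanSpace ℝ (Fin N ⊕ Fin N)) : ℝ :=
  (v - driftFd H C x) ⬝ᵥ (metricG H k x *ᵥ (v - driftFd H C x))

end AGHFSetup


/-- If a `C¹` curve `X : [0, T] → ℝ^{2N}` has `H(X₁(t))` invertible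
for every `t` and satisfies the velocity-consistency condition `Ẋ₁(t) = X₂(t)` on
`[0, T]`, then its action equals the total squared control effort:
`A(X) = ∫₀ᵀ ‖u(t)‖² dt`, where `u(t) = H(X₁(t)) Ẋ₂(t) + C(X(t))`. -/
theorem action_eq_controlSq_of_velocityConsistent (N : ℕ) (hN : 0 < N)
    (H : EuclideanSpace ℝ (Fin N) → Matrix (Fin N) (Fin N) ℝ) (hHcont : Continuous H)
    (C : EuclideanSpace ℝ (Fin N ⊕ Fin N) → EuclideanSpace ℝ (Fin N)) (hCcont : Continuous C)
    (k : ℝ) (hk : 0 < k) (T : ℝ) (hT : 0 ≤ T)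
    (X : ℝ → EuclideanSpace ℝ (Fin N ⊕ Fin N)) (hX : ContDiff ℝ 1 X)
    (hH : ∀ t ∈ Set.Icc (0 : ℝ) T, IsUnit (H (proj1 (X t))))
    (hvel : ∀ t ∈ Set.Icc (0 : ℝ) T, proj1 (deriv X t) = proj2 (X t)) :
    ∫ t in (0 : ℝ)..T, lagrangianL H C k (X t) (deriv X t) =
      ∫ t in (0 : ℝ)..T,
        ‖toEuc (H (proj1 (X t)) *ᵥ proj2 (deriv X t)) + C (X t)‖ ^ 2 := by
  apply intervalIntegral.integral_congr
  intro t ht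
  rw [Set.uIcc_of_le hT] at ht
  have hv1 : proj1 (deriv X t) = proj2 (X t) := hvel t ht
  have hdet : IsUnit (H (proj1 (X t))).det :=
    (Matrix.isUnit_iff_isUnit_det _).mp (hH t ht)
  set x := X t with hx
  set v := deriv X t with hv
  set M := H (proj1 x) with hM
  show lagrangianL H C k x v = ‖toEuc (M *ᵥ proj2 v) + C x‖ ^ 2
  set w₂ : Fin N → ℝ := (fun i => v (Sum.inr i)) + (M⁻¹ *ᵥ C x) with hw2
  have hw : v - driftFd H C x = Sum.elim (0 : Fin N → ℝ) w₂ := by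
    funext i
    cases i with
    | inl i =>
      have h1 : v (Sum.inl i) = proj2 x i := by
        have := congrArg (fun y => y i) hv1; simpa [proj1] using this
      simp [driftFd, pair2, h1, proj2, HSub.hSub, Sub.sub]
    | inr i =>
      simp [driftFd, pair2, hw2, proj2, HSub.hSub, Sub.sub, sub_neg_eq_add,
        Pi.add_apply]
      rfl
  have hMw : M *ᵥ w₂ = (M *ᵥ fun i => v (Sum.inr i)) + (fun i => C x i) := by
    rw [hw2, Matrix.mulVec_add, Matrix.mulVec_mulVec, Matrix.mul_nonsing_inv _ hdet,
      Matrix.one_mulVec]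
  have hL : lagrangianL H C k x v = (M *ᵥ w₂) ⬝ᵥ (M *ᵥ w₂) := by
    rw [lagrangianL, WithLp.ofLp_sub, hw, metricG, ← hM, Matrix.fromBlocks_mulVec]
    simp only [Sum.elim_comp_inl, Sum.elim_comp_inr, Matrix.mulVec_zero,
      Matrix.zero_mulVec, add_zero, zero_add, sumElim_dotProduct_sumElim,
      dotProduct_zero, zero_dotProduct]
    rw [← Matrix.mulVec_mulVec, Matrix.dotProduct_mulVec, Matrix.vecMul_transpose]
  have hnorm : ∀ y : EuclideanSpace ℝ (Fin N), ‖y‖ ^ 2 = y ⬝ᵥ y := by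
    intro y
    rw [EuclideanSpace.norm_eq, Real.sq_sqrt (by positivity)]
    simp [dotProduct, sq_abs, sq]
  have hvec : toEuc (M *ᵥ proj2 v) + C x = M *ᵥ w₂ := by
    rw [hMw]; rfl
  rw [hL, ← hvec, hnorm, WithLp.ofLp_add]
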